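/- Let H be a weakly norming graph and let ‖W‖ := t(H,|W|)^{1/e(H)}. For each ε ∈ (0,1), the modulus of convexity of the space (W_{r(H)}, ‖·‖) satisfies δ(ε) = 0; in particular, the space is not uniformly convex. -/

import Mathlib

open MeasureTheory

noncomputable def sym2Val {V Ω : Type*} (W : Ω → Ω → ℝ) (x : V → Ω) : Sym2 V → ℝ :=
  Sym2.lift ⟨fun i j => (W (x i) (x j) + W (x j) (x i)) / 2, fun i j => by simp [add_comm]⟩

/-- Homomorphism density `t(G, W)` of a graph `G` in a symmetric kernel `W`. -/
noncomputable def homDensity {V : Type} [Fintype V] {Ω : Type*} [MeasurableSpace Ω]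
    (G : SimpleGraph V) (μ : Measure Ω) (W : Ω → Ω → ℝ) : ℝ :=
  ∫ x : V → Ω, ∏ᶠ e ∈ G.edgeSet, sym2Val W x e ∂(Measure.pi fun _ => μ)

/-- Decorated homomorphism density `t(G, w)` for a decoration `w` of the edges. -/
noncomputable def decDensity {V : Type} [Fintype V] {Ω : Type*} [MeasurableSpace Ω]
    (G : SimpleGraph V) (μ : Measure Ω) (w : Sym2 V → Ω → Ω → ℝ) : ℝ :=
  ∫ x : V → Ω, ∏ᶠ e ∈ G.edgeSet, sym2Val (w e) x e ∂(Measure.pi fun _ => μ)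

/-- Bounded symmetric measurable kernel. -/
def GoodKernel {Ω : Type*} [MeasurableSpace Ω] (W : Ω → Ω → ℝ) : Prop :=
  Measurable (Function.uncurry W) ∧ (∀ x y, W x y = W y x) ∧ ∃ C, ∀ x y, |W x y| ≤ C

/-- Hatami's Hölder-type characterisation of weakly norming graphs. -/
def WeaklyNorming {V : Type} [Fintype V] (G : SimpleGraph V) : Prop :=
  ∀ (Ω : Type) (_ : MeasurableSpace Ω) (μ : Measure Ω), IsProbabilityMeasure μ →
    ∀ w : Sym2 V → Ω → Ω → ℝ, (∀ e, GoodKernel (w e)) → (∀ e x y, 0 ≤ w e x y) →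
      decDensity G μ w ^ G.edgeSet.ncard ≤ ∏ᶠ e ∈ G.edgeSet, homDensity G μ (w e)

/-- Hatami's Hölder-type characterisation of seminorming graphs. -/
def Seminorming {V : Type} [Fintype V] (G : SimpleGraph V) : Prop :=
  ∀ (Ω : Type) (_ : MeasurableSpace Ω) (μ : Measure Ω), IsProbabilityMeasure μ →
    ∀ w : Sym2 V → Ω → Ω → ℝ, (∀ e, GoodKernel (w e)) →
      decDensity G μ w ^ G.edgeSet.ncard ≤ ∏ᶠ e ∈ G.edgeSet, |homDensity G μ (w e)|

/-- Norming: seminorming and `‖·‖_H` vanishes only on a.e.-zero kernels. -/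
def Norming {V : Type} [Fintype V] (G : SimpleGraph V) : Prop :=
  Seminorming G ∧
    ∀ (Ω : Type) (_ : MeasurableSpace Ω) (μ : Measure Ω), IsProbabilityMeasure μ →
      ∀ W : Ω → Ω → ℝ, GoodKernel W → homDensity G μ W = 0 →
        ∀ᵐ p ∂(μ.prod μ), W p.1 p.2 = 0

/-- The weak graph norm `‖W‖_{r(H)} = t(H, |W|)^{1/e(H)}` on kernels over `[0,1]`. -/
noncomputable def rnorm {V : Type} [Fintype V] (H : SimpleGraph V) (W : ℝ → ℝ → ℝ) : ℝ :=
  homDensity H (MeasureTheory.volume.restrict (Set.Icc (0:ℝ) 1)) (fun x y => |W x y|)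
    ^ ((1 : ℝ) / (H.edgeSet.ncard : ℝ))


namespace RnormAux

lemma sym2Val_mk {V Ω : Type*} (W : Ω → Ω → ℝ) (x : V → Ω) (u v : V) :
    sym2Val W x s(u, v) = (W (x u) (x v) + W (x v) (x u)) / 2 := rfl

lemma sym2Val_symm {V Ω : Type*} (W : Ω → Ω → ℝ) (hW : ∀ a b, W a b = W b a)
    (x : V → Ω) (u v : V) : sym2Val W x s(u, v) = W (x u) (x v) := by
  rw [sym2Val_mk, hW (x v) (x u)]; ring

/-- the character `(-1)^t` on `ZMod 2`. -/
noncomputable def χ : ZMod 2 → ℝ := fun t => if t = 0 then 1 else -1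

lemma zmod2_cases : ∀ t : ZMod 2, t = 0 ∨ t = 1 := by decide

lemma χ_zero : χ 0 = 1 := rfl

lemma χ_one : χ 1 = -1 := rfl

lemma χ_add (s t : ZMod 2) : χ (s + t) = χ s * χ t := by
  rcases zmod2_cases s with hs | hs <;> rcases zmod2_cases t with ht | ht <;>
    subst hs <;> subst ht <;> simp [χ, show (1 + 1 : ZMod 2) = 0 from rfl]

lemma abs_χ (t : ZMod 2) : |χ t| = 1 := by
  rcases zmod2_cases t with h | h <;> subst h <;> simp [χ]

def dot {N : ℕ} (a b : Fin N → ZMod 2) : ZMod 2 := ∑ i, a i * b i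

lemma dot_comm {N : ℕ} (a b : Fin N → ZMod 2) : dot a b = dot b a := by
  unfold dot; exact Finset.sum_congr rfl fun i _ => mul_comm _ _

lemma dot_zero_right {N : ℕ} (a : Fin N → ZMod 2) : dot a 0 = 0 := by
  simp [dot]

lemma dot_add_right {N : ℕ} (a b c : Fin N → ZMod 2) :
    dot a (b + c) = dot a b + dot a c := by
  simp [dot, mul_add, Finset.sum_add_distrib]

lemma sum_χ_dot {N : ℕ} (S : Fin N → ZMod 2) :
    ∑ z : Fin N → ZMod 2, χ (dot z S) = if S = 0 then ((2 : ℝ) ^ N) else 0 := by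
  classical
  by_cases hS : S = 0
  · subst hS
    simp only [if_pos rfl]
    have h1 : ∀ z : Fin N → ZMod 2, χ (dot z 0) = 1 := by
      intro z; rw [dot_zero_right, χ_zero]
    rw [Finset.sum_congr rfl fun z _ => h1 z]
    simp [Finset.card_univ, Fintype.card_fun]
  · rw [if_neg hS]
    obtain ⟨i₀, hi₀⟩ : ∃ i₀, S i₀ ≠ 0 := by
      by_contra h; push_neg at h; exact hS (funext fun i => h i)
    have hSi₀ : S i₀ = 1 := (zmod2_cases (S i₀)).resolve_left hi₀
    refine Finset.sum_involution (fun z _ => Function.update z i₀ (z i₀ + 1)) ?_ ?_ ?_ ?_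
    · intro z _
      have hdot : dot (Function.update z i₀ (z i₀ + 1)) S = dot z S + 1 := by
        unfold dot
        rw [Finset.sum_eq_sum_sdiff_singleton_add (Finset.mem_univ i₀),
          Finset.sum_eq_sum_sdiff_singleton_add (Finset.mem_univ i₀) (fun i => z i * S i)]
        have : ∀ i ∈ Finset.univ \ {i₀}, Function.update z i₀ (z i₀ + 1) i * S i = z i * S i := by
          intro i hi
          rw [Function.update_of_ne (by simpa using (Finset.mem_sdiff.1 hi).2)]
        rw [Finset.sum_congr rfl this, Function.update_self, hSi₀]
        ring
      rw [hdot, χ_add, χ_one]; ring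
    · intro z _ _ h
      have h2 := congrFun h i₀
      simp only [Function.update_self] at h2
      exact (by decide : ∀ t : ZMod 2, t + 1 ≠ t) (z i₀) h2
    · intro z _; exact Finset.mem_univ _
    · intro z _
      ext j
      by_cases hj : j = i₀
      · subst hj
        simp only [Function.update_self]
        exact (by decide : ∀ t : ZMod 2, t + 1 + 1 = t) (z j)
      · simp [Function.update_of_ne hj]

lemma prod_χ_dot {α : Type*} {N : ℕ} (s : Finset α) (z : Fin N → ZMod 2)
    (g : α → (Fin N → ZMod 2)) :
    ∏ e ∈ s, χ (dot z (g e)) = χ (dot z (∑ e ∈ s, g e)) := by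
  classical
  induction s using Finset.induction_on with
  | empty => simp [dot_zero_right, χ_zero]
  | insert _ _ hx ih =>
    rw [Finset.prod_insert hx, Finset.sum_insert hx, dot_add_right, χ_add, ih]

section CharBound

set_option linter.unusedSectionVars false

variable {V : Type} [Fintype V] [DecidableEq V]

noncomputable def sgn {N : ℕ} (β : V → Fin N → ZMod 2) (e : Sym2 V) : ℝ :=
  sym2Val (fun a b => χ (dot a b)) β e

lemma sgn_mk {N : ℕ} (β : V → Fin N → ZMod 2) (u v : V) :
    sgn β s(u, v) = χ (dot (β u) (β v)) :=
  sym2Val_symm _ (fun a b => by rw [dot_comm]) β u v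

lemma abs_sgn {N : ℕ} (β : V → Fin N → ZMod 2) (e : Sym2 V) : |sgn β e| = 1 := by
  induction e using Sym2.ind with
  | _ u v => rw [sgn_mk]; exact abs_χ _

lemma sgn_congr {N : ℕ} {β γ : V → Fin N → ZMod 2} {e : Sym2 V}
    (h : ∀ v ∈ e, β v = γ v) : sgn β e = sgn γ e := by
  induction e using Sym2.ind with
  | _ u v =>
    rw [sgn_mk, sgn_mk, h u (Sym2.mem_mk_left u v), h v (Sym2.mem_mk_right u v)]

lemma sum_prod_sgn_le {N : ℕ} (F : Finset (Sym2 V)) (hne : F.Nonempty)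
    (hdiag : ∀ e ∈ F, ¬ e.IsDiag) :
    |∑ β : V → Fin N → ZMod 2, ∏ e ∈ F, sgn β e| ≤
      (2 : ℝ) ^ N * (2 : ℝ) ^ (N * (Fintype.card V - 2)) := by
  classical
  obtain ⟨e₀, he₀⟩ := hne
  revert he₀
  induction e₀ using Sym2.ind with
  | _ a₀ b₀ =>
  intro he₀
  set othv : Sym2 V → V := fun e => if h : a₀ ∈ e then Sym2.Mem.other' h else a₀ with hothv
  have hspec : ∀ (e : Sym2 V) (h : a₀ ∈ e), s(a₀, othv e) = e := by
    intro e h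
    simp only [hothv, dif_pos h]
    exact Sym2.other_spec' h
  have hne' : ∀ e ∈ F, a₀ ∈ e → othv e ≠ a₀ := by
    intro e he h hcon
    apply hdiag e he
    rw [← hspec e h, hcon]
    exact Sym2.mk_isDiag_iff.2 rfl
  have hinj : ∀ e ∈ F, ∀ e' ∈ F, a₀ ∈ e → a₀ ∈ e' → othv e = othv e' → e = e' := by
    intro e he e' he' h h' hoth
    rw [← hspec e h, ← hspec e' h', hoth]
  have ha₀e₀ : a₀ ∈ s(a₀, b₀) := Sym2.mem_mk_left a₀ b₀
  -- split the sum at vertex a₀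
  set E := (Equiv.funSplitAt a₀ (Fin N → ZMod 2)).symm with hE
  have hsum : ∑ β : V → Fin N → ZMod 2, ∏ e ∈ F, sgn β e
      = ∑ r : {j // j ≠ a₀} → Fin N → ZMod 2, ∑ z : Fin N → ZMod 2,
          ∏ e ∈ F, sgn (E (z, r)) e := by
    rw [← Equiv.sum_comp E (fun β => ∏ e ∈ F, sgn β e), Fintype.sum_prod_type]
    exact Finset.sum_comm
  -- the restriction kernel
  set R : ({j // j ≠ a₀} → Fin N → ZMod 2) → V → Fin N → ZMod 2 :=
    fun r j => if h : j = a₀ then 0 else r ⟨j, h⟩ with hR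
  set Fw := F.filter (fun e => a₀ ∈ e) with hFw
  set S : ({j // j ≠ a₀} → Fin N → ZMod 2) → Fin N → ZMod 2 :=
    fun r => ∑ e ∈ Fw, R r (othv e) with hS
  have hEapp : ∀ z r j, E (z, r) j = if h : j = a₀ then z else r ⟨j, h⟩ := by
    intro z r j
    rw [hE]
    exact Equiv.funSplitAt_symm_apply a₀ (Fin N → ZMod 2) (z, r) j
  have key : ∀ r, ∑ z : Fin N → ZMod 2, ∏ e ∈ F, sgn (E (z, r)) e
      = (∏ e ∈ F.filter (fun e => ¬ a₀ ∈ e), sgn (R r) e) *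
          (if S r = 0 then (2:ℝ)^N else 0) := by
    intro r
    have hsplit : ∀ z, ∏ e ∈ F, sgn (E (z, r)) e
        = χ (dot z (S r)) * ∏ e ∈ F.filter (fun e => ¬ a₀ ∈ e), sgn (R r) e := by
      intro z
      rw [← Finset.prod_filter_mul_prod_filter_not F (fun e => a₀ ∈ e)]
      congr 1
      · -- edges at a₀
        have hedge : ∀ e ∈ Fw, sgn (E (z, r)) e = χ (dot z (R r (othv e))) := by
          intro e he
          rw [Finset.mem_filter] at he
          obtain ⟨heF, hae⟩ := he
          have hone := hne' e heF hae
          conv_lhs => rw [← hspec e hae]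
          rw [sgn_mk]
          have h1 : E (z, r) a₀ = z := by rw [hEapp]; simp
          have h2 : E (z, r) (othv e) = R r (othv e) := by
            rw [hEapp]
            show _ = if h : othv e = a₀ then (0 : Fin N → ZMod 2) else r ⟨othv e, h⟩
            rw [dif_neg hone, dif_neg hone]
          rw [h1, h2]
        rw [show F.filter (fun e => a₀ ∈ e) = Fw from rfl,
          Finset.prod_congr rfl hedge, prod_χ_dot]
      · -- edges away from a₀
        refine Finset.prod_congr rfl fun e he => ?_
        rw [Finset.mem_filter] at he
        refine sgn_congr fun v hv => ?_
        have hva : v ≠ a₀ := fun hcon => he.2 (hcon ▸ hv)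
        rw [hEapp]
        show _ = if h : v = a₀ then (0 : Fin N → ZMod 2) else r ⟨v, h⟩
        rw [dif_neg hva, dif_neg hva]
    rw [Finset.sum_congr rfl fun z _ => hsplit z, ← Finset.sum_mul, mul_comm]
    congr 1
    exact sum_χ_dot (S r)
  rw [hsum, Finset.sum_congr rfl fun r _ => key r]
  -- bound by the number of r with S r = 0
  have habs : ∀ r : {j // j ≠ a₀} → Fin N → ZMod 2,
      |(∏ e ∈ F.filter (fun e => ¬ a₀ ∈ e), sgn (R r) e) *
        (if S r = 0 then (2:ℝ)^N else 0)| ≤ (if S r = 0 then (2:ℝ)^N else 0) := by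
    intro r
    rw [abs_mul, Finset.abs_prod]
    have h1 : ∏ e ∈ F.filter (fun e => ¬ a₀ ∈ e), |sgn (R r) e| = 1 := by
      rw [Finset.prod_congr rfl fun e _ => abs_sgn (R r) e, Finset.prod_const_one]
    rw [h1, one_mul, abs_of_nonneg (by positivity)]
  refine le_trans (Finset.abs_sum_le_sum_abs _ _) (le_trans (Finset.sum_le_sum
    fun r _ => habs r) ?_)
  rw [Finset.sum_ite, Finset.sum_const, Finset.sum_const_zero, add_zero, nsmul_eq_mul]
  rw [mul_comm]
  refine mul_le_mul_of_nonneg_left ?_ (by positivity)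
  -- count solutions of S r = 0
  set u₀ : {j // j ≠ a₀} := ⟨othv s(a₀, b₀), hne' _ he₀ ha₀e₀⟩ with hu₀
  have hcount : (Finset.univ.filter (fun r : {j // j ≠ a₀} → Fin N → ZMod 2 => S r = 0)).card
      ≤ Fintype.card ({k : {j // j ≠ a₀} // k ≠ u₀} → Fin N → ZMod 2) := by
    rw [← Finset.card_univ]
    refine Finset.card_le_card_of_injOn (fun r k => r k.1) (fun _ _ => Finset.mem_univ _) ?_
    intro r₁ h₁ r₂ h₂ hρ
    rw [Finset.mem_coe, Finset.mem_filter] at h₁ h₂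
    have hSdec : ∀ r : {j // j ≠ a₀} → Fin N → ZMod 2,
        S r = r u₀ + ∑ e ∈ Fw.erase s(a₀, b₀), R r (othv e) := by
      intro r
      have he₀w : s(a₀, b₀) ∈ Fw := Finset.mem_filter.2 ⟨he₀, ha₀e₀⟩
      have hS0 : S r = ∑ e ∈ Fw, R r (othv e) := rfl
      rw [hS0, ← Finset.add_sum_erase _ _ he₀w]
      congr 1
      show (if h : othv s(a₀, b₀) = a₀ then (0 : Fin N → ZMod 2)
          else r ⟨othv s(a₀, b₀), h⟩) = _
      rw [dif_neg (hne' _ he₀ ha₀e₀)]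
    funext k
    by_cases hk : k = u₀
    · subst hk
      have hrest : ∀ e ∈ Fw.erase s(a₀, b₀), R r₁ (othv e) = R r₂ (othv e) := by
        intro e he
        rw [Finset.mem_erase] at he
        obtain ⟨hee₀, heFw⟩ := he
        rw [Finset.mem_filter] at heFw
        have hoth_ne_a₀ := hne' e heFw.1 heFw.2
        have hoth_ne_u₀ : (⟨othv e, hoth_ne_a₀⟩ : {j // j ≠ a₀}) ≠ u₀ := by
          intro hcon
          exact hee₀ (hinj e heFw.1 _ he₀ heFw.2 ha₀e₀ (by
            simpa [hu₀, Subtype.ext_iff] using hcon))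
        show (if h : othv e = a₀ then (0 : Fin N → ZMod 2) else r₁ ⟨othv e, h⟩)
            = (if h : othv e = a₀ then (0 : Fin N → ZMod 2) else r₂ ⟨othv e, h⟩)
        rw [dif_neg hoth_ne_a₀, dif_neg hoth_ne_a₀]
        exact congrFun hρ ⟨⟨othv e, hoth_ne_a₀⟩, hoth_ne_u₀⟩
      have h0 : r₁ u₀ + ∑ e ∈ Fw.erase s(a₀, b₀), R r₁ (othv e)
          = r₂ u₀ + ∑ e ∈ Fw.erase s(a₀, b₀), R r₂ (othv e) := by
        rw [← hSdec r₁, ← hSdec r₂, h₁.2, h₂.2]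
      rw [Finset.sum_congr rfl hrest] at h0
      exact add_right_cancel h0
    · exact congrFun hρ ⟨k, hk⟩
  have hcard : Fintype.card ({k : {j // j ≠ a₀} // k ≠ u₀} → Fin N → ZMod 2)
      = (2 ^ N) ^ (Fintype.card V - 2) := by
    rw [Fintype.card_fun]
    congr 1
    · rw [Fintype.card_fun, ZMod.card, Fintype.card_fin]
    · have c1 : Fintype.card {j : V // j ≠ a₀} = Fintype.card V - 1 := by
        rw [Fintype.card_subtype_compl (fun j => j = a₀), Fintype.card_subtype_eq]
      have c2 : Fintype.card {k : {j // j ≠ a₀} // k ≠ u₀}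
          = Fintype.card {j : V // j ≠ a₀} - 1 := by
        rw [Fintype.card_subtype_compl (fun k => k = u₀), Fintype.card_subtype_eq]
      rw [c2, c1, Nat.sub_sub]
  calc ((Finset.univ.filter (fun r : {j // j ≠ a₀} → Fin N → ZMod 2 => S r = 0)).card : ℝ)
      ≤ ((2 ^ N) ^ (Fintype.card V - 2) : ℕ) := by
        exact_mod_cast hcard ▸ Nat.cast_le.2 hcount
    _ = (2 : ℝ) ^ (N * (Fintype.card V - 2)) := by
        push_cast
        rw [← pow_mul]

lemma card_fun_eq {N : ℕ} : (Fintype.card (V → Fin N → ZMod 2) : ℝ)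
    = (2 : ℝ) ^ (N * Fintype.card V) := by
  rw [Fintype.card_fun, Fintype.card_fun, ZMod.card, Fintype.card_fin]
  push_cast
  rw [← pow_mul]

lemma sum_prod_one_add {N : ℕ} (τ : ℝ) (hτ : |τ| ≤ 1) (Ed : Finset (Sym2 V))
    (hEne : Ed.Nonempty) (hdiag : ∀ e ∈ Ed, ¬ e.IsDiag) (hV : 2 ≤ Fintype.card V) :
    |∑ β : V → Fin N → ZMod 2, ∏ e ∈ Ed, (1 + τ * sgn β e) - (2:ℝ)^(N * Fintype.card V)|
      ≤ (2:ℝ) ^ Ed.card * (2:ℝ) ^ (N * (Fintype.card V - 1)) := by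
  classical
  have hrw : ∀ β : V → Fin N → ZMod 2, ∏ e ∈ Ed, (1 + τ * sgn β e)
      = ∑ F ∈ Ed.powerset, τ ^ F.card * ∏ e ∈ F, sgn β e := by
    intro β
    rw [Finset.prod_congr rfl (fun e _ => add_comm (1:ℝ) (τ * sgn β e)),
      Finset.prod_add]
    refine Finset.sum_congr rfl fun F _ => ?_
    rw [Finset.prod_const_one, mul_one, Finset.prod_mul_distrib, Finset.prod_const]
  rw [Finset.sum_congr rfl fun β _ => hrw β, Finset.sum_comm]
  have hswap : ∀ F ∈ Ed.powerset,
      ∑ β : V → Fin N → ZMod 2, τ ^ F.card * ∏ e ∈ F, sgn β e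
      = τ ^ F.card * ∑ β : V → Fin N → ZMod 2, ∏ e ∈ F, sgn β e := by
    intro F _
    rw [Finset.mul_sum]
  rw [Finset.sum_congr rfl hswap,
    ← Finset.sum_erase_add _ _ (Finset.empty_mem_powerset Ed)]
  have hempty : τ ^ (∅ : Finset (Sym2 V)).card *
      ∑ β : V → Fin N → ZMod 2, ∏ e ∈ (∅ : Finset (Sym2 V)), sgn β e
      = (2:ℝ)^(N * Fintype.card V) := by
    simp only [Finset.card_empty, pow_zero, one_mul, Finset.prod_empty]
    rw [Finset.sum_const, Finset.card_univ, nsmul_eq_mul, mul_one]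
    exact card_fun_eq
  rw [hempty, add_sub_cancel_right]
  refine le_trans (Finset.abs_sum_le_sum_abs _ _) ?_
  have hterm : ∀ F ∈ (Ed.powerset).erase ∅,
      |τ ^ F.card * ∑ β : V → Fin N → ZMod 2, ∏ e ∈ F, sgn β e|
        ≤ (2:ℝ) ^ (N * (Fintype.card V - 1)) := by
    intro F hF
    rw [Finset.mem_erase, Finset.mem_powerset] at hF
    obtain ⟨hFne, hFsub⟩ := hF
    rw [abs_mul, abs_pow]
    have h1 : |τ| ^ F.card ≤ 1 := pow_le_one₀ (abs_nonneg τ) hτ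
    have h2 := sum_prod_sgn_le (N := N) F (Finset.nonempty_iff_ne_empty.2 hFne)
      (fun e he => hdiag e (hFsub he))
    calc |τ| ^ F.card * |∑ β : V → Fin N → ZMod 2, ∏ e ∈ F, sgn β e|
        ≤ 1 * ((2 : ℝ) ^ N * (2 : ℝ) ^ (N * (Fintype.card V - 2))) := by
          exact mul_le_mul h1 h2 (abs_nonneg _) zero_le_one
      _ = (2:ℝ) ^ (N * (Fintype.card V - 1)) := by
          rw [one_mul, ← pow_add]
          congr 1
          have : Fintype.card V - 1 = (Fintype.card V - 2) + 1 := by omega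
          rw [this]
          ring
  refine le_trans (Finset.sum_le_sum hterm) ?_
  rw [Finset.sum_const, nsmul_eq_mul]
  refine mul_le_mul_of_nonneg_right ?_ (by positivity)
  calc (((Ed.powerset).erase ∅).card : ℝ) ≤ (Ed.powerset.card : ℝ) := by
        exact_mod_cast Finset.card_le_card (Finset.erase_subset _ _)
    _ = (2:ℝ) ^ Ed.card := by rw [Finset.card_powerset]; push_cast; ring

end CharBound

section MeasureSide

open Function ENNReal

/-- binary digit map `[0,1] → (Fin N → ZMod 2)`. -/
noncomputable def Dmap (N : ℕ) (x : ℝ) : Fin N → ZMod 2 :=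
  fun i => ((⌊x * 2 ^ N⌋₊ / 2 ^ (i : ℕ)) % 2 : ℕ)

/-- uniform probability measure on `Fin N → ZMod 2`. -/
noncomputable def unif (N : ℕ) : Measure (Fin N → ZMod 2) :=
  ((2 : ℝ≥0∞) ^ N)⁻¹ • Measure.count

lemma unif_singleton (N : ℕ) (ω : Fin N → ZMod 2) :
    unif N {ω} = ((2 : ℝ≥0∞) ^ N)⁻¹ := by
  rw [unif, Measure.smul_apply, Measure.count_singleton, smul_eq_mul, mul_one]

instance (N : ℕ) : IsProbabilityMeasure (unif N) := by
  constructor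
  rw [unif, Measure.smul_apply, smul_eq_mul, ← Finset.coe_univ,
    Measure.count_apply_finset]
  rw [Finset.card_univ, Fintype.card_fun, ZMod.card, Fintype.card_fin]
  push_cast
  rw [ENNReal.inv_mul_cancel (by positivity) (by simp)]

lemma measurable_Dmap (N : ℕ) : Measurable (Dmap N) := by
  refine measurable_pi_lambda _ fun i => ?_
  exact (measurable_from_nat (f := fun n : ℕ => ((n / 2 ^ (i : ℕ) % 2 : ℕ) : ZMod 2))).comp
    (Measurable.nat_floor (measurable_id.mul_const _))

lemma bits_inj {N : ℕ} {m m' : ℕ} (hm : m < 2 ^ N) (hm' : m' < 2 ^ N)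
    (h : ∀ i : Fin N, m / 2 ^ (i : ℕ) % 2 = m' / 2 ^ (i : ℕ) % 2) : m = m' := by
  refine Nat.eq_of_testBit_eq fun i => ?_
  by_cases hi : i < N
  · rw [Nat.testBit_eq_decide_div_mod_eq, Nat.testBit_eq_decide_div_mod_eq, h ⟨i, hi⟩]
  · push_neg at hi
    rw [Nat.testBit_lt_two_pow (lt_of_lt_of_le hm (Nat.pow_le_pow_right (by norm_num) hi)),
      Nat.testBit_lt_two_pow (lt_of_lt_of_le hm' (Nat.pow_le_pow_right (by norm_num) hi))]

lemma exists_bits (N : ℕ) (ω : Fin N → ZMod 2) :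
    ∃ j : ℕ, j < 2 ^ N ∧ ∀ i : Fin N, ((j / 2 ^ (i : ℕ) % 2 : ℕ) : ZMod 2) = ω i := by
  classical
  set g : Fin (2 ^ N) → (Fin N → ZMod 2) :=
    fun m i => ((m.1 / 2 ^ (i : ℕ) % 2 : ℕ) : ZMod 2) with hg
  have hinj : Function.Injective g := by
    intro m m' hmm
    ext
    refine bits_inj m.2 m'.2 fun i => ?_
    have := congrFun hmm i
    simp only [hg] at this
    have h2 : m.1 / 2 ^ (i : ℕ) % 2 < 2 := Nat.mod_lt _ (by norm_num)
    have h2' : m'.1 / 2 ^ (i : ℕ) % 2 < 2 := Nat.mod_lt _ (by norm_num)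
    have := congrArg ZMod.val this
    rwa [ZMod.val_cast_of_lt h2, ZMod.val_cast_of_lt h2'] at this
  have hsurj : Function.Surjective g := by
    have : Function.Bijective g := (Fintype.bijective_iff_injective_and_card g).2
      ⟨hinj, by rw [Fintype.card_fin, Fintype.card_fun, ZMod.card, Fintype.card_fin]⟩
    exact this.2
  obtain ⟨m, hm⟩ := hsurj ω
  exact ⟨m.1, m.2, fun i => congrFun hm i⟩

lemma measure_Dmap_fiber (N : ℕ) (ω : Fin N → ZMod 2) :
    (volume.restrict (Set.Icc (0:ℝ) 1)) (Dmap N ⁻¹' {ω}) = ((2 : ℝ≥0∞) ^ N)⁻¹ := by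
  obtain ⟨j, hj, hbits⟩ := exists_bits N ω
  have h2N : (0:ℝ) < 2 ^ N := by positivity
  have hj1 : ((j:ℝ) + 1) / 2 ^ N ≤ 1 := by
    rw [div_le_one h2N]
    have : (j : ℝ) + 1 ≤ ((2:ℝ) ^ N : ℝ) := by exact_mod_cast Nat.succ_le_of_lt hj
    simpa using this
  have hj0 : (0:ℝ) ≤ (j:ℝ) / 2 ^ N := by positivity
  have hIco_sub : Set.Ico ((j:ℝ) / 2 ^ N) (((j:ℝ) + 1) / 2 ^ N) ⊆ Dmap N ⁻¹' {ω} := by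
    intro x hx
    obtain ⟨hx1, hx2⟩ := hx
    have hx0 : 0 ≤ x := le_trans hj0 hx1
    have hfloor : ⌊x * 2 ^ N⌋₊ = j := by
      rw [Nat.floor_eq_iff (by positivity)]
      constructor
      · calc (j:ℝ) = (j:ℝ) / 2 ^ N * 2 ^ N := by field_simp
          _ ≤ x * 2 ^ N := by exact mul_le_mul_of_nonneg_right hx1 (le_of_lt h2N)
      · calc x * 2 ^ N < ((j:ℝ) + 1) / 2 ^ N * 2 ^ N := by
              exact mul_lt_mul_of_pos_right hx2 h2N
          _ = (j:ℝ) + 1 := by field_simp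
    simp only [Set.mem_preimage, Set.mem_singleton_iff]
    funext i
    rw [Dmap, hfloor]
    exact hbits i
  have hsub2 : Dmap N ⁻¹' {ω} ∩ Set.Icc (0:ℝ) 1 ⊆
      Set.Ico ((j:ℝ) / 2 ^ N) (((j:ℝ) + 1) / 2 ^ N) ∪ {1} := by
    rintro x ⟨hxf, hx0, hx1⟩
    rcases eq_or_lt_of_le hx1 with h1 | h1
    · right; exact Set.mem_singleton_iff.2 h1
    left
    have hm : ⌊x * 2 ^ N⌋₊ < 2 ^ N := by
      rw [Nat.floor_lt (by positivity)]
      push_cast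
      calc x * 2 ^ N < 1 * 2 ^ N := mul_lt_mul_of_pos_right h1 h2N
        _ = 2 ^ N := one_mul _
    have hmj : ⌊x * 2 ^ N⌋₊ = j := by
      refine bits_inj hm hj fun i => ?_
      have h2 : ⌊x * 2 ^ N⌋₊ / 2 ^ (i : ℕ) % 2 < 2 := Nat.mod_lt _ (by norm_num)
      have h2' : j / 2 ^ (i : ℕ) % 2 < 2 := Nat.mod_lt _ (by norm_num)
      have hωi : ((⌊x * 2 ^ N⌋₊ / 2 ^ (i : ℕ) % 2 : ℕ) : ZMod 2) = ω i := by
        simp only [Set.mem_preimage, Set.mem_singleton_iff] at hxf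
        exact congrFun hxf i
      have := hωi.trans (hbits i).symm
      have := congrArg ZMod.val this
      rwa [ZMod.val_cast_of_lt h2, ZMod.val_cast_of_lt h2'] at this
    constructor
    · rw [div_le_iff₀ h2N]
      calc (j:ℝ) = (⌊x * 2 ^ N⌋₊ : ℝ) := by exact_mod_cast hmj.symm
        _ ≤ x * 2 ^ N := Nat.floor_le (by positivity)
    · rw [lt_div_iff₀ h2N]
      calc x * 2 ^ N < (⌊x * 2 ^ N⌋₊ : ℝ) + 1 := Nat.lt_floor_add_one _
        _ = (j:ℝ) + 1 := by rw [hmj]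
  have hIco_vol : volume (Set.Ico ((j:ℝ) / 2 ^ N) (((j:ℝ) + 1) / 2 ^ N))
      = ((2 : ℝ≥0∞) ^ N)⁻¹ := by
    rw [Real.volume_Ico]
    have : ((j:ℝ) + 1) / 2 ^ N - (j:ℝ) / 2 ^ N = (2 ^ N)⁻¹ := by field_simp; ring
    rw [this, ENNReal.ofReal_inv_of_pos h2N]
    congr 1
    rw [ENNReal.ofReal_pow (by norm_num)]
    norm_num
  have hmeas : MeasurableSet (Dmap N ⁻¹' {ω}) :=
    measurable_Dmap N (measurableSet_singleton ω)
  rw [Measure.restrict_apply hmeas]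
  refine le_antisymm ?_ ?_
  · calc volume (Dmap N ⁻¹' {ω} ∩ Set.Icc 0 1)
        ≤ volume (Set.Ico ((j:ℝ) / 2 ^ N) (((j:ℝ) + 1) / 2 ^ N) ∪ {1}) :=
          measure_mono hsub2
      _ ≤ volume (Set.Ico ((j:ℝ) / 2 ^ N) (((j:ℝ) + 1) / 2 ^ N)) + volume ({1} : Set ℝ) :=
          measure_union_le _ _
      _ = ((2 : ℝ≥0∞) ^ N)⁻¹ := by rw [hIco_vol, Real.volume_singleton, add_zero]
  · rw [← hIco_vol]
    refine measure_mono (Set.subset_inter hIco_sub ?_)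
    intro x hx
    exact ⟨le_trans hj0 hx.1, le_trans (le_of_lt hx.2) hj1⟩

lemma Dmap_measurePreserving (N : ℕ) :
    MeasurePreserving (Dmap N) (volume.restrict (Set.Icc (0:ℝ) 1)) (unif N) := by
  refine ⟨measurable_Dmap N, ?_⟩
  rw [Measure.ext_iff_singleton]
  intro ω
  rw [Measure.map_apply (measurable_Dmap N) (measurableSet_singleton ω),
    measure_Dmap_fiber, unif_singleton]

instance : IsProbabilityMeasure (volume.restrict (Set.Icc (0:ℝ) 1)) := by
  constructor
  rw [Measure.restrict_apply_univ, Real.volume_Icc]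
  norm_num

end MeasureSide

section HomDensityLemmas

set_option linter.unusedSectionVars false

open Function ENNReal

variable {V : Type} [Fintype V] [DecidableEq V]

lemma sym2Val_comp {Ω Ω' : Type*} (G : Ω' → Ω' → ℝ) (D : Ω → Ω') (x : V → Ω) (e : Sym2 V) :
    sym2Val (fun a b => G (D a) (D b)) x e = sym2Val G (fun v => D (x v)) e := by
  induction e using Sym2.ind with | _ u v => rfl

lemma sym2Val_const {Ω : Type*} (c : ℝ) (x : V → Ω) (e : Sym2 V) :
    sym2Val (fun _ _ => c) x e = c := by
  induction e using Sym2.ind with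
  | _ u v => rw [sym2Val_mk]; ring

lemma sym2Val_mul {Ω : Type*} (c : ℝ) (K : Ω → Ω → ℝ) (x : V → Ω) (e : Sym2 V) :
    sym2Val (fun a b => c * K a b) x e = c * sym2Val K x e := by
  induction e using Sym2.ind with
  | _ u v => rw [sym2Val_mk, sym2Val_mk]; ring

lemma measurable_sym2Val {K : ℝ → ℝ → ℝ} (hK : Measurable (uncurry K)) (e : Sym2 V) :
    Measurable fun x : V → ℝ => sym2Val K x e := by
  induction e using Sym2.ind with
  | _ u v =>
    simp only [sym2Val_mk]
    have h1 : Measurable fun x : V → ℝ => uncurry K (x u, x v) :=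
      hK.comp' ((measurable_pi_apply u).prodMk (measurable_pi_apply v))
    have h2 : Measurable fun x : V → ℝ => uncurry K (x v, x u) :=
      hK.comp' ((measurable_pi_apply v).prodMk (measurable_pi_apply u))
    exact (h1.add h2).div_const 2

lemma abs_sym2Val_le {K : ℝ → ℝ → ℝ} {C : ℝ} (hCb : ∀ x y, |K x y| ≤ C)
    (x : V → ℝ) (e : Sym2 V) : |sym2Val K x e| ≤ C := by
  induction e using Sym2.ind with
  | _ u v =>
    rw [sym2Val_mk, abs_div, abs_two]
    rw [div_le_iff₀ (by norm_num)]
    calc |K (x u) (x v) + K (x v) (x u)| ≤ |K (x u) (x v)| + |K (x v) (x u)| := abs_add_le _ _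
      _ ≤ C + C := add_le_add (hCb _ _) (hCb _ _)
      _ = C * 2 := by ring

lemma const_le_sym2Val {K : ℝ → ℝ → ℝ} {c : ℝ} (hlow : ∀ x y, c ≤ K x y)
    (x : V → ℝ) (e : Sym2 V) : c ≤ sym2Val K x e := by
  induction e using Sym2.ind with
  | _ u v =>
    rw [sym2Val_mk]
    have := add_le_add (hlow (x u) (x v)) (hlow (x v) (x u))
    linarith

lemma homDensity_comp_finite (H : SimpleGraph V) (N : ℕ)
    (G : (Fin N → ZMod 2) → (Fin N → ZMod 2) → ℝ) :
    homDensity H (volume.restrict (Set.Icc (0:ℝ) 1)) (fun x y => G (Dmap N x) (Dmap N y))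
      = ((2:ℝ) ^ (N * Fintype.card V))⁻¹ *
        ∑ β : V → Fin N → ZMod 2, ∏ e ∈ (Set.toFinite H.edgeSet).toFinset,
          sym2Val G β e := by
  classical
  unfold homDensity
  set F : (V → Fin N → ZMod 2) → ℝ :=
    fun β => ∏ e ∈ (Set.toFinite H.edgeSet).toFinset, sym2Val G β e with hF
  have h2 : (fun x : V → ℝ =>
      ∏ᶠ e ∈ H.edgeSet, sym2Val (fun a b => G (Dmap N a) (Dmap N b)) x e)
      = fun x => F (fun v => Dmap N (x v)) := by
    funext x
    rw [finprod_mem_eq_finite_toFinset_prod _ (Set.toFinite H.edgeSet), hF]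
    exact Finset.prod_congr rfl fun e _ => sym2Val_comp G (Dmap N) x e
  rw [h2]
  have hpres : MeasurePreserving (fun (x : V → ℝ) (v : V) => Dmap N (x v))
      (Measure.pi fun _ => volume.restrict (Set.Icc (0:ℝ) 1))
      (Measure.pi fun _ => unif N) :=
    measurePreserving_pi _ _ fun _ => Dmap_measurePreserving N
  have hsing : ∀ β : V → Fin N → ZMod 2,
      ((Measure.pi fun _ : V => unif N) {β}).toReal
        = ((2:ℝ) ^ (N * Fintype.card V))⁻¹ := by
    intro β
    rw [← Set.univ_pi_singleton β, Measure.pi_pi]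
    rw [Finset.prod_congr rfl (fun v _ => unif_singleton N (β v)), Finset.prod_const,
      Finset.card_univ]
    rw [ENNReal.toReal_pow, ENNReal.toReal_inv, ENNReal.toReal_pow, ENNReal.toReal_ofNat]
    rw [← inv_pow, ← pow_mul]
    rw [inv_pow]
  calc ∫ x : V → ℝ, F (fun v => Dmap N (x v))
          ∂(Measure.pi fun _ => volume.restrict (Set.Icc (0:ℝ) 1))
      = ∫ β, F β ∂(Measure.map (fun (x : V → ℝ) (v : V) => Dmap N (x v))
          (Measure.pi fun _ => volume.restrict (Set.Icc (0:ℝ) 1))) :=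
        (integral_map hpres.measurable.aemeasurable
          (measurable_of_countable F).aestronglyMeasurable).symm
    _ = ∫ β, F β ∂(Measure.pi fun _ => unif N) := by rw [hpres.map_eq]
    _ = ∑ β, ((Measure.pi fun _ : V => unif N) {β}).toReal • F β :=
        integral_fintype Integrable.of_finite
    _ = ((2:ℝ) ^ (N * Fintype.card V))⁻¹ * ∑ β, F β := by
        rw [Finset.sum_congr rfl fun β _ => by rw [hsing β, smul_eq_mul], ← Finset.mul_sum]

lemma homDensity_const (H : SimpleGraph V) (c : ℝ) :
    homDensity H (volume.restrict (Set.Icc (0:ℝ) 1)) (fun _ _ => c)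
      = c ^ (Set.toFinite H.edgeSet).toFinset.card := by
  unfold homDensity
  have h2 : (fun x : V → ℝ => ∏ᶠ e ∈ H.edgeSet, sym2Val (fun _ _ => c) x e)
      = fun _x => c ^ (Set.toFinite H.edgeSet).toFinset.card := by
    funext x
    rw [finprod_mem_eq_finite_toFinset_prod _ (Set.toFinite H.edgeSet),
      Finset.prod_congr rfl fun e _ => sym2Val_const c x e, Finset.prod_const]
  rw [h2, integral_const, probReal_univ, one_smul]

lemma homDensity_smul (H : SimpleGraph V) (c : ℝ) (K : ℝ → ℝ → ℝ) :
    homDensity H (volume.restrict (Set.Icc (0:ℝ) 1)) (fun x y => c * K x y)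
      = c ^ (Set.toFinite H.edgeSet).toFinset.card *
          homDensity H (volume.restrict (Set.Icc (0:ℝ) 1)) K := by
  unfold homDensity
  rw [← integral_const_mul]
  congr 1
  funext x
  rw [finprod_mem_eq_finite_toFinset_prod _ (Set.toFinite H.edgeSet),
    finprod_mem_eq_finite_toFinset_prod _ (Set.toFinite H.edgeSet),
    Finset.prod_congr rfl fun e _ => sym2Val_mul c K x e,
    Finset.prod_mul_distrib, Finset.prod_const]

lemma homDensity_ge_const (H : SimpleGraph V) {K : ℝ → ℝ → ℝ} {c C : ℝ}
    (hc : 0 ≤ c) (hK : Measurable (uncurry K)) (hCb : ∀ x y, |K x y| ≤ C)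
    (hlow : ∀ x y, c ≤ K x y) :
    c ^ (Set.toFinite H.edgeSet).toFinset.card
      ≤ homDensity H (volume.restrict (Set.Icc (0:ℝ) 1)) K := by
  classical
  unfold homDensity
  set s := (Set.toFinite H.edgeSet).toFinset with hs
  have h2 : (fun x : V → ℝ => ∏ᶠ e ∈ H.edgeSet, sym2Val K x e)
      = fun x => ∏ e ∈ s, sym2Val K x e := by
    funext x
    rw [finprod_mem_eq_finite_toFinset_prod _ (Set.toFinite H.edgeSet)]
  rw [h2]
  have hC0 : 0 ≤ C := le_trans (abs_nonneg _) (hCb 0 0)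
  have hmeasF : Measurable fun x : V → ℝ => ∏ e ∈ s, sym2Val K x e :=
    Finset.measurable_prod _ fun e _ => measurable_sym2Val hK e
  have hint : Integrable (fun x : V → ℝ => ∏ e ∈ s, sym2Val K x e)
      (Measure.pi fun _ => volume.restrict (Set.Icc (0:ℝ) 1)) := by
    refine ⟨hmeasF.aestronglyMeasurable, HasFiniteIntegral.of_bounded
      (C := C ^ s.card) (ae_of_all _ fun x => ?_)⟩
    rw [Real.norm_eq_abs, Finset.abs_prod]
    calc ∏ e ∈ s, |sym2Val K x e| ≤ ∏ _e ∈ s, C :=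
          Finset.prod_le_prod (fun e _ => abs_nonneg _) (fun e _ => abs_sym2Val_le hCb x e)
      _ = C ^ s.card := Finset.prod_const C
  calc c ^ s.card
      = ∫ _x : V → ℝ, c ^ s.card
          ∂(Measure.pi fun _ => volume.restrict (Set.Icc (0:ℝ) 1)) := by
        rw [integral_const, probReal_univ, one_smul]
    _ ≤ ∫ x : V → ℝ, ∏ e ∈ s, sym2Val K x e
          ∂(Measure.pi fun _ => volume.restrict (Set.Icc (0:ℝ) 1)) := by
        refine integral_mono (integrable_const _) hint fun x => ?_
        calc c ^ s.card = ∏ _e ∈ s, c := (Finset.prod_const c).symm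
          _ ≤ ∏ e ∈ s, sym2Val K x e :=
            Finset.prod_le_prod (fun e _ => hc) (fun e _ => const_le_sym2Val hlow x e)

end HomDensityLemmas

section Assembly

set_option linter.unusedSectionVars false

open Function ENNReal

lemma rpow_pow_inv {T : ℝ} (hT : 0 < T) {n : ℕ} (hn : n ≠ 0) :
    (T ^ (-(1:ℝ)/(n:ℝ))) ^ n = T⁻¹ := by
  have hn' : (n:ℝ) ≠ 0 := Nat.cast_ne_zero.2 hn
  rw [← Real.rpow_natCast (T ^ (-(1:ℝ)/(n:ℝ))) n, ← Real.rpow_mul hT.le]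
  rw [show -(1:ℝ)/(n:ℝ) * (n:ℝ) = -1 by field_simp]
  exact Real.rpow_neg_one T

lemma pow_rpow_inv {a : ℝ} (ha : 0 ≤ a) {n : ℕ} (hn : n ≠ 0) :
    (a ^ n) ^ ((1:ℝ)/(n:ℝ)) = a := by
  have hn' : (n:ℝ) ≠ 0 := Nat.cast_ne_zero.2 hn
  rw [← Real.rpow_natCast a n, ← Real.rpow_mul ha]
  rw [show (n:ℝ) * ((1:ℝ)/(n:ℝ)) = 1 by field_simp]
  exact Real.rpow_one a

lemma c_bounds {T δ : ℝ} {n : ℕ} (hn : n ≠ 0) (hδ0 : 0 < δ) (hδ1 : δ ≤ 1/4)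
    (h : |T - 1| ≤ δ) :
    0 < T ∧ 1 - δ ≤ T ^ (-(1:ℝ)/(n:ℝ)) ∧ T ^ (-(1:ℝ)/(n:ℝ)) ≤ 1 + 2*δ := by
  obtain ⟨h1, h2⟩ := abs_le.1 h
  have hT1 : 1 - δ ≤ T := by linarith
  have hT2 : T ≤ 1 + δ := by linarith
  have h1δ : 0 < 1 - δ := by linarith
  have hTpos : 0 < T := by linarith
  have hnR : (1:ℝ) ≤ (n:ℝ) := by exact_mod_cast Nat.one_le_iff_ne_zero.2 hn
  have hexp0 : -(1:ℝ)/(n:ℝ) ≤ 0 := by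
    apply div_nonpos_of_nonpos_of_nonneg <;> [linarith; linarith]
  have hexp1 : (-1:ℝ) ≤ -(1:ℝ)/(n:ℝ) := by
    rw [neg_div]
    apply neg_le_neg
    rw [div_le_one (by linarith)]
    exact hnR
  refine ⟨hTpos, ?_, ?_⟩
  · calc 1 - δ ≤ (1+δ)⁻¹ := by
          have hmul : (1-δ) * (1+δ) ≤ 1 := by nlinarith
          calc 1 - δ = (1-δ)*(1+δ) * (1+δ)⁻¹ := by field_simp
            _ ≤ 1 * (1+δ)⁻¹ := mul_le_mul_of_nonneg_right hmul (by positivity)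
            _ = (1+δ)⁻¹ := one_mul _
      _ = (1+δ) ^ (-1:ℝ) := (Real.rpow_neg_one _).symm
      _ ≤ (1+δ) ^ (-(1:ℝ)/(n:ℝ)) :=
          Real.rpow_le_rpow_of_exponent_le (by linarith) hexp1
      _ ≤ T ^ (-(1:ℝ)/(n:ℝ)) := Real.rpow_le_rpow_of_nonpos hTpos hT2 hexp0
  · calc T ^ (-(1:ℝ)/(n:ℝ)) ≤ (1-δ) ^ (-(1:ℝ)/(n:ℝ)) :=
          Real.rpow_le_rpow_of_nonpos h1δ hT1 hexp0
      _ ≤ (1-δ) ^ (-1:ℝ) :=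
          Real.rpow_le_rpow_of_exponent_ge h1δ (by linarith) hexp1
      _ = (1-δ)⁻¹ := Real.rpow_neg_one _
      _ ≤ 1 + 2*δ := by
          have hmul2 : 1 ≤ (1+2*δ) * (1-δ) := by nlinarith
          calc (1-δ)⁻¹ = 1 * (1-δ)⁻¹ := (one_mul _).symm
            _ ≤ ((1+2*δ)*(1-δ)) * (1-δ)⁻¹ :=
                mul_le_mul_of_nonneg_right hmul2 (by positivity)
            _ = 1 + 2*δ := by field_simp

variable {V : Type} [Fintype V] [DecidableEq V]

lemma sym2Val_one_add_sgn {N : ℕ} (τ' : ℝ) (β : V → Fin N → ZMod 2) (e : Sym2 V) :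
    sym2Val (fun a b => 1 + τ' * χ (dot a b)) β e = 1 + τ' * sgn β e := by
  induction e using Sym2.ind with
  | _ u v =>
    rw [sym2Val_mk, sgn_mk, dot_comm (β v) (β u)]
    ring


lemma measurable_kernel (N : ℕ) (g : (Fin N → ZMod 2) → (Fin N → ZMod 2) → ℝ) :
    Measurable (Function.uncurry fun x y : ℝ => g (Dmap N x) (Dmap N y)) := by
  have hDD : Measurable fun p : ℝ × ℝ => (Dmap N p.1, Dmap N p.2) :=
    ((measurable_Dmap N).comp measurable_fst).prodMk
      ((measurable_Dmap N).comp measurable_snd)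
  exact (measurable_of_countable
    (fun q : (Fin N → ZMod 2) × (Fin N → ZMod 2) => g q.1 q.2)).comp hDD

lemma T_bound (H : SimpleGraph V) (hEne : ((Set.toFinite H.edgeSet).toFinset).Nonempty)
    (hV2 : 2 ≤ Fintype.card V) (N : ℕ) (τ' : ℝ) (hτ' : |τ'| ≤ 1) :
    |homDensity H (volume.restrict (Set.Icc (0:ℝ) 1))
        (fun x y => 1 + τ' * χ (dot (Dmap N x) (Dmap N y))) - 1|
      ≤ (2:ℝ) ^ ((Set.toFinite H.edgeSet).toFinset.card) * ((2:ℝ) ^ N)⁻¹ := by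
  classical
  have hdiag : ∀ e ∈ (Set.toFinite H.edgeSet).toFinset, ¬ e.IsDiag := fun e he =>
    H.not_isDiag_of_mem_edgeSet ((Set.Finite.mem_toFinset _).1 he)
  rw [show (fun x y => 1 + τ' * χ (dot (Dmap N x) (Dmap N y)))
      = (fun x y => (fun a b => 1 + τ' * χ (dot a b)) (Dmap N x) (Dmap N y)) from rfl,
    homDensity_comp_finite H N (fun a b => 1 + τ' * χ (dot a b))]
  rw [Finset.sum_congr rfl fun β _ => Finset.prod_congr rfl fun e _ =>
    sym2Val_one_add_sgn τ' β e]
  have hb := sum_prod_one_add (N := N) τ' hτ' _ hEne hdiag hV2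
  set S := ∑ β : V → Fin N → ZMod 2, ∏ e ∈ (Set.toFinite H.edgeSet).toFinset,
    (1 + τ' * sgn β e) with hS
  have hpos : (0:ℝ) < 2 ^ (N * Fintype.card V) := by positivity
  have key : ((2:ℝ) ^ (N * Fintype.card V))⁻¹ * S - 1
      = ((2:ℝ) ^ (N * Fintype.card V))⁻¹ * (S - 2 ^ (N * Fintype.card V)) := by
    field_simp
  rw [key, abs_mul, abs_of_pos (inv_pos.2 hpos)]
  have hsplit : (2:ℝ) ^ (N * Fintype.card V)
      = 2 ^ (N * (Fintype.card V - 1)) * 2 ^ N := by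
    rw [← pow_add]
    congr 1
    rw [← Nat.mul_succ]
    congr 1
    omega
  calc ((2:ℝ) ^ (N * Fintype.card V))⁻¹ * |S - 2 ^ (N * Fintype.card V)|
      ≤ ((2:ℝ) ^ (N * Fintype.card V))⁻¹ *
          ((2:ℝ) ^ (Set.toFinite H.edgeSet).toFinset.card *
            (2:ℝ) ^ (N * (Fintype.card V - 1))) :=
        mul_le_mul_of_nonneg_left hb (by positivity)
    _ = (2:ℝ) ^ ((Set.toFinite H.edgeSet).toFinset.card) * ((2:ℝ) ^ N)⁻¹ := by
        rw [hsplit]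
        have h1 : ((2:ℝ) ^ (N * (Fintype.card V - 1))) ≠ 0 := by positivity
        have h2 : ((2:ℝ) ^ N) ≠ 0 := by positivity
        field_simp

end Assembly


end RnormAux

open RnormAux in
set_option maxHeartbeats 2000000 in
/-- For a weakly norming graph `H` (with at least one edge), the modulus of convexity of
`(W_{r(H)}, ‖·‖_{r(H)})` vanishes on `(0,1)`: for every `ε ∈ (0,1)` and `η > 0` there are
unit vectors `W₁, W₂` with `‖W₁ - W₂‖ ≥ ε` and `1 - ‖(W₁+W₂)/2‖ < η`.  In particular the
space is not uniformly convex. -/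
theorem rnorm_modulus_of_convexity_zero {V : Type} [Fintype V]
    (H : SimpleGraph V) (hH : WeaklyNorming H) (hE : H.edgeSet.ncard ≠ 0)
    (ε : ℝ) (hε : ε ∈ Set.Ioo (0 : ℝ) 1) (η : ℝ) (hη : 0 < η) :
    ∃ W₁ W₂ : ℝ → ℝ → ℝ, GoodKernel W₁ ∧ GoodKernel W₂ ∧
      rnorm H W₁ = 1 ∧ rnorm H W₂ = 1 ∧
      ε ≤ rnorm H (fun x y => W₁ x y - W₂ x y) ∧
      1 - rnorm H (fun x y => (W₁ x y + W₂ x y) / 2) < η := by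
  classical
  obtain ⟨hε0, hε1⟩ := hε
  set n := (Set.toFinite H.edgeSet).toFinset.card with hn
  have hncard : H.edgeSet.ncard = n := Set.ncard_eq_toFinset_card _ _
  have hn0 : n ≠ 0 := by rwa [hncard] at hE
  have hEne : ((Set.toFinite H.edgeSet).toFinset).Nonempty :=
    Finset.card_pos.1 (Nat.pos_of_ne_zero hn0)
  have hV2 : 2 ≤ Fintype.card V := by
    obtain ⟨e₀, he₀⟩ := hEne
    have hd := H.not_isDiag_of_mem_edgeSet ((Set.Finite.mem_toFinset _).1 he₀)
    revert hd
    induction e₀ using Sym2.ind with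
    | _ a b =>
      intro hd
      exact Fintype.one_lt_card_iff.2 ⟨a, b, fun hab => hd (Sym2.mk_isDiag_iff.2 hab)⟩
  set δ₀ := min (η/3) (min (ε/8) (1/4)) with hδ₀def
  have hδ₀pos : 0 < δ₀ := lt_min (by linarith) (lt_min (by linarith) (by norm_num))
  obtain ⟨N, hNlt⟩ : ∃ N : ℕ, (2:ℝ) ^ n * ((2:ℝ) ^ N)⁻¹ < δ₀ := by
    obtain ⟨N, hN⟩ := exists_pow_lt_of_lt_one (x := δ₀ / 2 ^ n) (by positivity)
      (by norm_num : (1:ℝ)/2 < 1)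
    refine ⟨N, ?_⟩
    have h1 : ((1:ℝ)/2) ^ N = ((2:ℝ) ^ N)⁻¹ := by rw [div_pow, one_pow, one_div]
    rw [h1] at hN
    have h2 : (0:ℝ) < 2 ^ n := by positivity
    calc (2:ℝ)^n * ((2:ℝ)^N)⁻¹ < (2:ℝ)^n * (δ₀ / 2^n) :=
          mul_lt_mul_of_pos_left hN h2
      _ = δ₀ := by field_simp
  set δ := (2:ℝ) ^ n * ((2:ℝ) ^ N)⁻¹ with hδdef
  have hδpos : 0 < δ := by positivity
  have hδη : δ < η/3 := lt_of_lt_of_le hNlt (min_le_left _ _)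
  have hδε : δ ≤ ε/8 := (lt_of_lt_of_le hNlt ((min_le_right _ _).trans (min_le_left _ _))).le
  have hδ4 : δ ≤ 1/4 := (lt_of_lt_of_le hNlt ((min_le_right _ _).trans (min_le_right _ _))).le
  have hTpb := T_bound H hEne hV2 N ε (by rw [abs_of_pos hε0]; linarith)
  have hTmb := T_bound H hEne hV2 N (-ε) (by rw [abs_neg, abs_of_pos hε0]; linarith)
  rw [← hn, ← hδdef] at hTpb hTmb
  set σf : ℝ → ℝ → ℝ := fun x y => χ (dot (Dmap N x) (Dmap N y)) with hσf
  rw [show (fun x y => 1 + ε * χ (dot (Dmap N x) (Dmap N y)))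
      = (fun x y => 1 + ε * σf x y) from rfl] at hTpb
  rw [show (fun x y => 1 + (-ε) * χ (dot (Dmap N x) (Dmap N y)))
      = (fun x y => 1 + (-ε) * σf x y) from rfl] at hTmb
  have hσabs : ∀ x y, |σf x y| = 1 := fun x y => abs_χ _
  have hσcases : ∀ x y, σf x y = 1 ∨ σf x y = -1 := fun x y =>
    (abs_eq (by norm_num : (0:ℝ) ≤ 1)).1 (hσabs x y)
  have hσsymm : ∀ x y, σf x y = σf y x := by
    intro x y
    simp only [hσf]
    rw [dot_comm]
  set Tp := homDensity H (volume.restrict (Set.Icc (0:ℝ) 1))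
    (fun x y => 1 + ε * σf x y) with hTpdef
  set Tm := homDensity H (volume.restrict (Set.Icc (0:ℝ) 1))
    (fun x y => 1 + (-ε) * σf x y) with hTmdef
  obtain ⟨hTppos, hc1low, hc1up⟩ := c_bounds hn0 hδpos hδ4 hTpb
  obtain ⟨hTmpos, hc2low, hc2up⟩ := c_bounds hn0 hδpos hδ4 hTmb
  set c₁ := Tp ^ (-(1:ℝ)/(n:ℝ)) with hc₁def
  set c₂ := Tm ^ (-(1:ℝ)/(n:ℝ)) with hc₂def
  have hc1pos : 0 < c₁ := lt_of_lt_of_le (by linarith) hc1low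
  have hc2pos : 0 < c₂ := lt_of_lt_of_le (by linarith) hc2low
  refine ⟨fun x y => c₁ * (1 + ε * σf x y), fun x y => c₂ * (1 + (-ε) * σf x y),
    ?_, ?_, ?_, ?_, ?_, ?_⟩
  · refine ⟨?_, ?_, ⟨c₁ * 2, ?_⟩⟩
    · exact measurable_kernel N (fun a b => c₁ * (1 + ε * χ (dot a b)))
    · intro x y
      show c₁ * (1 + ε * σf x y) = c₁ * (1 + ε * σf y x)
      rw [hσsymm x y]
    · intro x y
      show |c₁ * (1 + ε * σf x y)| ≤ c₁ * 2
      rcases hσcases x y with h | h <;> rw [h]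
      · rw [abs_of_pos (mul_pos hc1pos (by nlinarith))]; nlinarith
      · rw [abs_of_pos (mul_pos hc1pos (by nlinarith))]; nlinarith
  · refine ⟨?_, ?_, ⟨c₂ * 2, ?_⟩⟩
    · exact measurable_kernel N (fun a b => c₂ * (1 + (-ε) * χ (dot a b)))
    · intro x y
      show c₂ * (1 + (-ε) * σf x y) = c₂ * (1 + (-ε) * σf y x)
      rw [hσsymm x y]
    · intro x y
      show |c₂ * (1 + (-ε) * σf x y)| ≤ c₂ * 2
      rcases hσcases x y with h | h <;> rw [h]
      · rw [abs_of_pos (mul_pos hc2pos (by nlinarith))]; nlinarith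
      · rw [abs_of_pos (mul_pos hc2pos (by nlinarith))]; nlinarith
  · show (homDensity H (volume.restrict (Set.Icc (0:ℝ) 1))
        fun x y => |c₁ * (1 + ε * σf x y)|) ^ ((1:ℝ)/(H.edgeSet.ncard : ℝ)) = 1
    have habs : (fun x y : ℝ => |c₁ * (1 + ε * σf x y)|)
        = fun x y => c₁ * (1 + ε * σf x y) := by
      funext x y
      rcases hσcases x y with h | h <;> rw [h]
      · rw [abs_of_pos (mul_pos hc1pos (by nlinarith))]
      · rw [abs_of_pos (mul_pos hc1pos (by nlinarith))]
    rw [habs, hncard, homDensity_smul H c₁ (fun x y => 1 + ε * σf x y), ← hTpdef,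
      ← hn, hc₁def, rpow_pow_inv hTppos hn0, inv_mul_cancel₀ (ne_of_gt hTppos),
      Real.one_rpow]
  · show (homDensity H (volume.restrict (Set.Icc (0:ℝ) 1))
        fun x y => |c₂ * (1 + (-ε) * σf x y)|) ^ ((1:ℝ)/(H.edgeSet.ncard : ℝ)) = 1
    have habs : (fun x y : ℝ => |c₂ * (1 + (-ε) * σf x y)|)
        = fun x y => c₂ * (1 + (-ε) * σf x y) := by
      funext x y
      rcases hσcases x y with h | h <;> rw [h]
      · rw [abs_of_pos (mul_pos hc2pos (by nlinarith))]
      · rw [abs_of_pos (mul_pos hc2pos (by nlinarith))]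
    rw [habs, hncard, homDensity_smul H c₂ (fun x y => 1 + (-ε) * σf x y), ← hTmdef,
      ← hn, hc₂def, rpow_pow_inv hTmpos hn0, inv_mul_cancel₀ (ne_of_gt hTmpos),
      Real.one_rpow]
  · show ε ≤ (homDensity H (volume.restrict (Set.Icc (0:ℝ) 1))
        fun x y => |c₁ * (1 + ε * σf x y) - c₂ * (1 + (-ε) * σf x y)|)
          ^ ((1:ℝ)/(H.edgeSet.ncard : ℝ))
    rw [hncard]
    have hlow : ∀ x y : ℝ,
        ε ≤ |c₁ * (1 + ε * σf x y) - c₂ * (1 + (-ε) * σf x y)| := by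
      intro x y
      rcases hσcases x y with h | h <;> rw [h]
      · have e1 : (1-δ)*(1+ε) ≤ c₁*(1+ε) :=
          mul_le_mul_of_nonneg_right hc1low (by linarith)
        have e2 : c₂*(1-ε) ≤ (1+2*δ)*(1-ε) :=
          mul_le_mul_of_nonneg_right hc2up (by linarith)
        have hval : ε ≤ c₁ * (1 + ε * 1) - c₂ * (1 + (-ε) * 1) := by nlinarith
        exact le_trans hval (le_abs_self _)
      · have e1 : c₁*(1-ε) ≤ (1+2*δ)*(1-ε) :=
          mul_le_mul_of_nonneg_right hc1up (by linarith)
        have e2 : (1-δ)*(1+ε) ≤ c₂*(1+ε) :=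
          mul_le_mul_of_nonneg_right hc2low (by linarith)
        have hval : c₁ * (1 + ε * (-1)) - c₂ * (1 + (-ε) * (-1)) ≤ -ε := by nlinarith
        calc ε ≤ -(c₁ * (1 + ε * (-1)) - c₂ * (1 + (-ε) * (-1))) := by linarith
          _ ≤ |c₁ * (1 + ε * (-1)) - c₂ * (1 + (-ε) * (-1))| := neg_le_abs _
    have hmeas : Measurable (Function.uncurry fun x y : ℝ =>
        |c₁ * (1 + ε * σf x y) - c₂ * (1 + (-ε) * σf x y)|) :=
      measurable_kernel N (fun a b =>
        |c₁ * (1 + ε * χ (dot a b)) - c₂ * (1 + (-ε) * χ (dot a b))|)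
    have hub : ∀ x y : ℝ,
        |(|c₁ * (1 + ε * σf x y) - c₂ * (1 + (-ε) * σf x y)|)| ≤ c₁*2 + c₂*2 := by
      intro x y
      rw [abs_abs]
      rcases hσcases x y with h | h <;> rw [h] <;>
        exact abs_le.2 ⟨by nlinarith, by nlinarith⟩
    have hge := homDensity_ge_const H hε0.le hmeas hub hlow
    rw [← hn] at hge
    calc ε = (ε ^ n) ^ ((1:ℝ)/(n:ℝ)) := (pow_rpow_inv hε0.le hn0).symm
      _ ≤ (homDensity H (volume.restrict (Set.Icc (0:ℝ) 1))
          fun x y => |c₁ * (1 + ε * σf x y) - c₂ * (1 + (-ε) * σf x y)|)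
            ^ ((1:ℝ)/(n:ℝ)) :=
        Real.rpow_le_rpow (by positivity) hge (by positivity)
  · show 1 - (homDensity H (volume.restrict (Set.Icc (0:ℝ) 1))
        fun x y => |(c₁ * (1 + ε * σf x y) + c₂ * (1 + (-ε) * σf x y)) / 2|)
          ^ ((1:ℝ)/(H.edgeSet.ncard : ℝ)) < η
    rw [hncard]
    have hL0 : (0:ℝ) ≤ 1 - 3*δ := by linarith
    have hlow : ∀ x y : ℝ,
        1 - 3*δ ≤ |(c₁ * (1 + ε * σf x y) + c₂ * (1 + (-ε) * σf x y)) / 2| := by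
      intro x y
      rcases hσcases x y with h | h <;> rw [h] <;>
        refine le_trans ?_ (le_abs_self _)
      · have e1 : (1-δ)*(1+ε) ≤ c₁*(1+ε) :=
          mul_le_mul_of_nonneg_right hc1low (by linarith)
        have e2 : (1-δ)*(1-ε) ≤ c₂*(1-ε) :=
          mul_le_mul_of_nonneg_right hc2low (by linarith)
        nlinarith
      · have e1 : (1-δ)*(1-ε) ≤ c₁*(1-ε) :=
          mul_le_mul_of_nonneg_right hc1low (by linarith)
        have e2 : (1-δ)*(1+ε) ≤ c₂*(1+ε) :=
          mul_le_mul_of_nonneg_right hc2low (by linarith)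
        nlinarith
    have hmeas : Measurable (Function.uncurry fun x y : ℝ =>
        |(c₁ * (1 + ε * σf x y) + c₂ * (1 + (-ε) * σf x y)) / 2|) :=
      measurable_kernel N (fun a b =>
        |(c₁ * (1 + ε * χ (dot a b)) + c₂ * (1 + (-ε) * χ (dot a b))) / 2|)
    have hub : ∀ x y : ℝ,
        |(|(c₁ * (1 + ε * σf x y) + c₂ * (1 + (-ε) * σf x y)) / 2|)| ≤ c₁ + c₂ := by
      intro x y
      rw [abs_abs]
      rcases hσcases x y with h | h <;> rw [h] <;>
        exact abs_le.2 ⟨by nlinarith, by nlinarith⟩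
    have hge := homDensity_ge_const H hL0 hmeas hub hlow
    rw [← hn] at hge
    have hfinal : 1 - 3*δ ≤ (homDensity H (volume.restrict (Set.Icc (0:ℝ) 1))
        fun x y => |(c₁ * (1 + ε * σf x y) + c₂ * (1 + (-ε) * σf x y)) / 2|)
          ^ ((1:ℝ)/(n:ℝ)) := by
      calc 1 - 3*δ = ((1 - 3*δ) ^ n) ^ ((1:ℝ)/(n:ℝ)) := (pow_rpow_inv hL0 hn0).symm
        _ ≤ _ := Real.rpow_le_rpow (by positivity) hge (by positivity)
    linarith
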